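/- Let A be a Boolean algebra and F ⊆ A a subset whose cardinality is an uncountable regular cardinal, and suppose F is moderate in itself: for every g ∈ F, the norm ‖g‖_F = {f ∈ F : 0 < g ⊓ f < f} is finite. Then F has a subset G with the same cardinality as F that is pairwise incomparable: for all distinct f, g ∈ G, neither f ≤ g nor g ≤ f. -/

import Mathlib

universe u

open Cardinal

/-- The norm of `a` with respect to `F`: the set of `f ∈ F` split by `a`. -/
def norm {α : Type u} [BooleanAlgebra α] (F : Set α) (a : α) : Set α :=
  {f ∈ F | ⊥ < a ⊓ f ∧ a ⊓ f < f}

/-- `F` is moderate in itself: the norm `‖g‖_F` is finite for every `g ∈ F`. -/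
def ModerateInItself {α : Type u} [BooleanAlgebra α] (F : Set α) : Prop :=
  ∀ g ∈ F, (norm F g).Finite

/-- If `F` is moderate in itself and `|F|` is an uncountable regular cardinal, then `F`
has a pairwise incomparable subset of the same cardinality. -/
theorem moderate_incomparable_subset {α : Type u} [BooleanAlgebra α] (F : Set α)
    (hreg : (Cardinal.mk F).IsRegular) (hunc : Cardinal.aleph0 < Cardinal.mk F)
    (hmod : ModerateInItself F) :
    ∃ G ⊆ F, Cardinal.mk G = Cardinal.mk F ∧
      ∀ f ∈ G, ∀ g ∈ G, f ≠ g → ¬ f ≤ g ∧ ¬ g ≤ f := by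
  classical
  -- the strict upper set of `x` inside `F`
  set U : α → Set α := fun x => {g ∈ F | x < g} with hUdef
  -- it is finite for `x ∈ F`, `x ≠ ⊥`, being contained in `norm F x`
  have hUfin : ∀ x ∈ F, x ≠ ⊥ → (U x).Finite := by
    intro x hx hxbot
    refine (hmod x hx).subset ?_
    rintro g ⟨hgF, hlt⟩
    have hinf : x ⊓ g = x := inf_eq_left.2 hlt.le
    exact ⟨hgF, by rw [hinf]; exact bot_lt_iff_ne_bot.2 hxbot, by rw [hinf]; exact hlt⟩
  -- partition `F` into countably many classes
  set C : Option (ULift.{u} ℕ) → Set α := fun i =>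
    match i with
    | none => F ∩ {⊥}
    | some n => {x ∈ F | x ≠ ⊥ ∧ (U x).ncard = n.down} with hCdef
  have hcover : F ⊆ ⋃ i, C i := by
    intro x hx
    by_cases hb : x = ⊥
    · exact Set.mem_iUnion.2 ⟨none, hx, hb⟩
    · exact Set.mem_iUnion.2 ⟨some ⟨(U x).ncard⟩, hx, hb, rfl⟩
  -- some class has full cardinality
  have hex : ∃ n : ℕ, ¬ (Cardinal.mk (C (some ⟨n⟩)) < Cardinal.mk F) := by
    by_contra h
    push_neg at h
    have hall : ∀ i, Cardinal.mk (C i) < Cardinal.mk F := by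
      intro i
      match i with
      | none =>
        have hsub : C none ⊆ {⊥} := Set.inter_subset_right
        have h1 : Cardinal.mk (C none) ≤ 1 :=
          (Cardinal.mk_le_mk_of_subset hsub).trans_eq (Cardinal.mk_singleton _)
        exact h1.trans_lt (lt_trans Cardinal.one_lt_aleph0 hunc)
      | some n => exact h n.down
    have h1 : Cardinal.mk F ≤ Cardinal.sum (fun i => Cardinal.mk (C i)) :=
      (Cardinal.mk_le_mk_of_subset hcover).trans Cardinal.mk_iUnion_le_sum_mk
    have hι : Cardinal.mk (Option (ULift.{u} ℕ)) < Cardinal.mk F :=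
      lt_of_le_of_lt Cardinal.mk_le_aleph0 hunc
    exact absurd (h1.trans_lt (Cardinal.sum_lt_of_isRegular hreg hι hall)) (lt_irrefl _)
  obtain ⟨n, hn⟩ := hex
  have hGsub : C (some ⟨n⟩) ⊆ F := fun x hx => hx.1
  refine ⟨C (some ⟨n⟩), hGsub, le_antisymm (Cardinal.mk_le_mk_of_subset hGsub) (not_lt.1 hn), ?_⟩
  -- the class is an antichain
  have key : ∀ a b : α, a ∈ C (some ⟨n⟩) → b ∈ C (some ⟨n⟩) → a < b → False := by
    intro a b ha hb hab
    obtain ⟨haF, habot, hacard⟩ := ha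
    obtain ⟨hbF, hbbot, hbcard⟩ := hb
    have hsub : insert b (U b) ⊆ U a := by
      intro z hz
      rcases Set.mem_insert_iff.1 hz with rfl | hz
      · exact ⟨hbF, hab⟩
      · exact ⟨hz.1, hab.trans hz.2⟩
    have h1 : (insert b (U b)).ncard ≤ (U a).ncard :=
      Set.ncard_le_ncard hsub (hUfin a haF habot)
    have h2 : (insert b (U b)).ncard = (U b).ncard + 1 :=
      Set.ncard_insert_of_notMem (fun h => lt_irrefl b h.2) (hUfin b hbF hbbot)
    rw [h2, hbcard, hacard] at h1
    omega
  intro f hf g hg hne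
  exact ⟨fun hle => key f g hf hg (lt_of_le_of_ne hle hne),
         fun hle => key g f hg hf (lt_of_le_of_ne hle hne.symm)⟩
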